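/- (Second-order accuracy of the mid-point recurrence formula) Let τ > 0, Δt > 0, ξ = Δt/(2τ), and let g : [tₙ, tₙ + Δt] → ℝ be C². Then the approximation ∫_{tₙ}^{tₙ+Δt} exp(-(tₙ+Δt-s)/τ) g'(s) ds = exp(-ξ) (g(tₙ+Δt) - g(tₙ)) + R with remainder bound |R| ≤ K Δt³ for a constant K depending only on τ and bounds for g' and g'' on the interval. -/

import Mathlib

open scoped intervalIntegral

/-- Quadratic Taylor bound for `exp` on the nonpositive half-line. -/
lemma exp_taylor_abs {a b : ℝ} (ha : a ≤ 0) (hb : b ≤ 0) :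
    |Real.exp a - Real.exp b - Real.exp b * (a - b)| ≤ (a - b) ^ 2 := by
  have lip : ∀ x ∈ Set.Iic (0 : ℝ), ∀ y ∈ Set.Iic (0 : ℝ),
      |Real.exp x - Real.exp y| ≤ |x - y| := by
    intro x hx y hy
    have key : ∀ z ∈ Set.Iic (0 : ℝ),
        HasDerivWithinAt Real.exp (Real.exp z) (Set.Iic 0) z := fun z _ =>
      (Real.hasDerivAt_exp z).hasDerivWithinAt
    have bound : ∀ z ∈ Set.Iic (0 : ℝ), ‖Real.exp z‖ ≤ 1 := by
      intro z hz
      rw [Real.norm_eq_abs, abs_of_pos (Real.exp_pos z)]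
      exact Real.exp_le_one_iff.mpr hz
    have := (convex_Iic (0 : ℝ)).norm_image_sub_le_of_norm_hasDerivWithin_le
      key bound hy hx
    simpa [Real.norm_eq_abs] using this
  have hid : Real.exp a - Real.exp b - Real.exp b * (a - b)
      = ∫ t in b..a, (Real.exp t - Real.exp b) := by
    rw [intervalIntegral.integral_sub (Real.continuous_exp.intervalIntegrable _ _)
      (intervalIntegrable_const), integral_exp, intervalIntegral.integral_const]
    simp [smul_eq_mul]
    ring
  rw [hid, ← Real.norm_eq_abs]
  have hstep : ∀ t ∈ Set.uIoc b a, ‖Real.exp t - Real.exp b‖ ≤ |a - b| := by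
    intro t ht
    rw [Set.uIoc, Set.mem_Ioc] at ht
    have ht0 : t ≤ 0 := le_trans ht.2 (max_le hb ha)
    have htb : |t - b| ≤ |a - b| := by
      rcases le_total a b with h | h
      · simp only [min_comm b a, max_comm b a, min_eq_left h, max_eq_right h] at ht
        rw [abs_of_nonpos (by linarith [ht.2]), abs_of_nonpos (by linarith)]
        linarith [ht.1]
      · simp only [min_comm b a, max_comm b a, min_eq_right h, max_eq_left h] at ht
        rw [abs_of_pos (by linarith [ht.1]), abs_of_nonneg (by linarith)]
        linarith [ht.2]
    calc ‖Real.exp t - Real.exp b‖ ≤ |t - b| := by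
          simpa [Real.norm_eq_abs] using lip t ht0 b hb
      _ ≤ |a - b| := htb
  calc ‖∫ t in b..a, (Real.exp t - Real.exp b)‖
      ≤ |a - b| * |a - b| :=
        intervalIntegral.norm_integral_le_of_norm_le_const hstep
    _ = (a - b) ^ 2 := by rw [← abs_mul, ← sq, abs_sq]

/-- Second-order accuracy of the mid-point recurrence formula: for `τ > 0` and
bounds `M₁, M₂` on `g'` and `g''`, there is a constant `K` (depending only on
`τ`, `M₁`, `M₂`) such that for every C² function `g` on `[tₙ, tₙ + Δt]`,
`∫_{tₙ}^{tₙ+Δt} e^{-(tₙ+Δt-s)/τ} g'(s) ds = e^{-Δt/(2τ)} (g(tₙ+Δt) - g(tₙ)) + R`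
with `|R| ≤ K Δt³`. -/
theorem midpoint_recurrence_second_order
    (τ M₁ M₂ : ℝ) (hτ : 0 < τ) (hM₁ : 0 ≤ M₁) (hM₂ : 0 ≤ M₂) :
    ∃ K : ℝ, ∀ (g g' g'' : ℝ → ℝ) (tn Δt : ℝ), 0 < Δt →
      (∀ s ∈ Set.Icc tn (tn + Δt), HasDerivAt g (g' s) s) →
      (∀ s ∈ Set.Icc tn (tn + Δt), HasDerivAt g' (g'' s) s) →
      (∀ s ∈ Set.Icc tn (tn + Δt), |g' s| ≤ M₁) →
      (∀ s ∈ Set.Icc tn (tn + Δt), |g'' s| ≤ M₂) →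
      |(∫ s in tn..(tn + Δt), Real.exp (-(tn + Δt - s) / τ) * g' s)
          - Real.exp (-(Δt / (2 * τ))) * (g (tn + Δt) - g tn)|
        ≤ K * Δt ^ 3 := by
  refine ⟨M₁ / τ ^ 2 + M₂ / τ, ?_⟩
  intro g g' g'' tn Δt hΔt hg hg' hb1 hb2
  set C : ℝ := M₁ / τ ^ 2 + M₂ / τ with hCdef
  have hC : 0 ≤ C := by positivity
  set T : ℝ := tn + Δt with hT
  set m : ℝ := tn + Δt / 2 with hm
  set c : ℝ := Real.exp (-(Δt / (2 * τ))) with hc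
  have htT : tn ≤ T := by simp [hT]; linarith
  have hIcc : Set.uIcc tn T = Set.Icc tn T := Set.uIcc_of_le htT
  have hgc : ∀ s ∈ Set.Icc tn T, HasDerivAt g (g' s) s := hg
  -- continuity and integrability of g'
  have hg'cont : ContinuousOn g' (Set.Icc tn T) := fun s hs =>
    ((hg' s hs).continuousAt).continuousWithinAt
  have hg'int : IntervalIntegrable g' MeasureTheory.volume tn T := by
    apply ContinuousOn.intervalIntegrable; rwa [hIcc]
  -- fundamental theorem of calculus
  have hftc : ∫ s in tn..T, g' s = g T - g tn :=
    intervalIntegral.integral_eq_sub_of_hasDerivAt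
      (fun s hs => hg s (by rwa [hIcc] at hs)) hg'int
  -- the exponential kernel
  set f : ℝ → ℝ := fun s => Real.exp (-(T - s) / τ) with hf
  have hfcont : Continuous f := by
    apply Real.continuous_exp.comp; fun_prop
  -- c = f m
  have hcm : c = f m := by
    rw [hc, hf]
    congr 1
    rw [hT, hm]; ring
  have hc1 : c ≤ 1 := by
    rw [hc, Real.exp_le_one_iff]
    have : 0 < Δt / (2 * τ) := by positivity
    linarith
  have hc0 : 0 < c := Real.exp_pos _
  -- the corrected integrand
  set P : ℝ → ℝ := fun s => f s * g' s - c * g' s - c / τ * g' m * (s - m) with hP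
  -- integrabilities
  have hfg'int : IntervalIntegrable (fun s => f s * g' s) MeasureTheory.volume tn T := by
    apply ContinuousOn.intervalIntegrable
    rw [hIcc]; exact hfcont.continuousOn.mul hg'cont
  have hcg'int : IntervalIntegrable (fun s => c * g' s) MeasureTheory.volume tn T :=
    hg'int.const_mul c
  have hlinint : IntervalIntegrable (fun s => c / τ * g' m * (s - m))
      MeasureTheory.volume tn T := by
    apply Continuous.intervalIntegrable; fun_prop
  -- the linear term integrates to zero
  have hzero : ∫ s in tn..T, c / τ * g' m * (s - m) = 0 := by
    rw [intervalIntegral.integral_const_mul]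
    have : ∫ s in tn..T, (s - m) = 0 := by
      have hcomp := intervalIntegral.integral_comp_sub_right (a := tn) (b := T)
        (fun x => x) m
      rw [hcomp, integral_id]
      have h1 : T - m = Δt / 2 := by rw [hT, hm]; ring
      have h2 : tn - m = -(Δt / 2) := by rw [hm]; ring
      rw [h1, h2]; ring
    rw [this, mul_zero]
  -- main algebraic identity
  have key : (∫ s in tn..T, f s * g' s) - c * (g T - g tn) = ∫ s in tn..T, P s := by
    rw [hP]
    rw [intervalIntegral.integral_sub (hfg'int.sub hcg'int) hlinint,
      intervalIntegral.integral_sub hfg'int hcg'int,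
      intervalIntegral.integral_const_mul, hftc, hzero]
    ring
  -- pointwise bound on P
  have hPbound : ∀ s ∈ Set.uIoc tn T, ‖P s‖ ≤ C * (s - m) ^ 2 := by
    intro s hs
    rw [Set.uIoc_of_le htT] at hs
    have hsIcc : s ∈ Set.Icc tn T := ⟨le_of_lt hs.1, hs.2⟩
    have hmIcc : m ∈ Set.Icc tn T := by
      constructor
      · rw [hm]; linarith
      · rw [hm, hT]; linarith
    -- exp Taylor bound
    have ha0 : -(T - s) / τ ≤ 0 := by
      apply div_nonpos_of_nonpos_of_nonneg _ hτ.le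
      have : s ≤ T := hsIcc.2
      linarith
    have hb0 : -(Δt / (2 * τ)) ≤ 0 := by
      have : 0 < Δt / (2 * τ) := by positivity
      linarith
    have hab : -(T - s) / τ - -(Δt / (2 * τ)) = (s - m) / τ := by
      rw [hT, hm]; field_simp; ring
    have hexp : |f s - c - c * ((s - m) / τ)| ≤ ((s - m) / τ) ^ 2 := by
      have := exp_taylor_abs ha0 hb0
      rw [hab] at this
      simpa [hf, hc] using this
    -- MVT bound on g'
    have hg'lip : |g' s - g' m| ≤ M₂ * |s - m| := by
      have := (convex_Icc tn T).norm_image_sub_le_of_norm_hasDerivWithin_le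
        (fun x hx => (hg' x hx).hasDerivWithinAt)
        (fun x hx => by simpa [Real.norm_eq_abs] using hb2 x hx) hmIcc hsIcc
      simpa [Real.norm_eq_abs] using this
    -- decompose P
    have hdecomp : P s = (f s - c - c * ((s - m) / τ)) * g' s
        + c / τ * (s - m) * (g' s - g' m) := by
      rw [hP]; field_simp; ring
    rw [Real.norm_eq_abs, hdecomp]
    have h1 : |(f s - c - c * ((s - m) / τ)) * g' s| ≤ M₁ / τ ^ 2 * (s - m) ^ 2 := by
      rw [abs_mul]
      have := mul_le_mul hexp (hb1 s hsIcc) (abs_nonneg _) (sq_nonneg _)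
      calc |f s - c - c * ((s - m) / τ)| * |g' s| ≤ ((s - m) / τ) ^ 2 * M₁ := this
        _ = M₁ / τ ^ 2 * (s - m) ^ 2 := by field_simp
    have h2 : |c / τ * (s - m) * (g' s - g' m)| ≤ M₂ / τ * (s - m) ^ 2 := by
      rw [abs_mul, abs_mul]
      have hcτ : |c / τ| ≤ 1 / τ := by
        rw [abs_of_pos (by positivity)]
        gcongr
      calc |c / τ| * |s - m| * |g' s - g' m|
          ≤ (1 / τ) * |s - m| * (M₂ * |s - m|) := by
            apply mul_le_mul _ hg'lip (abs_nonneg _)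
            · positivity
            · exact mul_le_mul_of_nonneg_right hcτ (abs_nonneg _)
        _ = M₂ / τ * |s - m| ^ 2 := by ring
        _ = M₂ / τ * (s - m) ^ 2 := by rw [sq_abs]
    calc |(f s - c - c * ((s - m) / τ)) * g' s
          + c / τ * (s - m) * (g' s - g' m)|
        ≤ |(f s - c - c * ((s - m) / τ)) * g' s|
          + |c / τ * (s - m) * (g' s - g' m)| := abs_add_le _ _
      _ ≤ M₁ / τ ^ 2 * (s - m) ^ 2 + M₂ / τ * (s - m) ^ 2 := add_le_add h1 h2
      _ = C * (s - m) ^ 2 := by rw [hCdef]; ring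
  -- integrate the bound
  have hBint : IntervalIntegrable (fun s => C * (s - m) ^ 2)
      MeasureTheory.volume tn T := by
    apply Continuous.intervalIntegrable; fun_prop
  have hInt : ‖∫ s in tn..T, P s‖ ≤ |∫ s in tn..T, C * (s - m) ^ 2| :=
    intervalIntegral.norm_integral_le_abs_of_norm_le
      (MeasureTheory.ae_restrict_of_forall_mem measurableSet_uIoc hPbound) hBint
  -- compute the integral of the bound
  have hcomp : ∫ s in tn..T, C * (s - m) ^ 2 = C * (Δt ^ 3 / 12) := by
    rw [intervalIntegral.integral_const_mul]
    have := intervalIntegral.integral_comp_sub_right (a := tn) (b := T)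
      (fun x => x ^ 2) m
    rw [this, integral_pow]
    have h1 : T - m = Δt / 2 := by rw [hT, hm]; ring
    have h2 : tn - m = -(Δt / 2) := by rw [hm]; ring
    rw [h1, h2]
    ring
  have hfinal : |(∫ s in tn..T, f s * g' s) - c * (g T - g tn)| ≤ C * (Δt ^ 3 / 12) := by
    rw [key, ← Real.norm_eq_abs]
    refine hInt.trans ?_
    rw [hcomp, abs_of_nonneg (by positivity)]
  refine hfinal.trans ?_
  have : C * (Δt ^ 3 / 12) ≤ C * Δt ^ 3 := by
    apply mul_le_mul_of_nonneg_left _ hC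
    nlinarith [pow_pos hΔt 3]
  linarith
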